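/- Let D and ℓ be natural numbers with 0 < ℓ < D. For every unit vector ψ in the Euclidean space ℂ^D there exist a natural number k with k ≤ D − ℓ and a unit vector φ ∈ ℂ^D such that φ_d = 0 for every index d with k ≤ d < k + ℓ, and |⟨φ, ψ⟩| ≥ √(1 − ℓ/(D − ℓ)). -/

import Mathlib

open scoped InnerProductSpace
open Finset

theorem stmt_2 (D ℓ : ℕ) (hℓ : 0 < ℓ) (hD : ℓ < D)
    (ψ : EuclideanSpace ℂ (Fin D)) (hψ : ‖ψ‖ = 1) :
    ∃ k ≤ D - ℓ, ∃ φ : EuclideanSpace ℂ (Fin D), ‖φ‖ = 1 ∧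
      (∀ d : Fin D, k ≤ (d : ℕ) → (d : ℕ) < k + ℓ → φ d = 0) ∧
      Real.sqrt (1 - (ℓ : ℝ) / ((D : ℝ) - (ℓ : ℝ))) ≤ ‖⟪φ, ψ⟫_ℂ‖ := by
  have hDl : (0:ℝ) < (D:ℝ) - ℓ := by
    have : (ℓ:ℝ) < D := by exact_mod_cast hD
    linarith
  by_cases hcase : D < 2 * ℓ
  · -- trivial case: the bound is nonpositive
    refine ⟨D - ℓ, le_rfl, EuclideanSpace.single ⟨0, hℓ.trans hD⟩ 1, ?_, ?_, ?_⟩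
    · simp [EuclideanSpace.norm_single]
    · intro d hd _
      have hd0 : (d:ℕ) ≠ 0 := by omega
      simp only [EuclideanSpace.single_apply]
      rw [if_neg]
      simp [Fin.ext_iff, hd0]
    · have harg : 1 - (ℓ : ℝ) / ((D : ℝ) - ℓ) ≤ 0 := by
        have h1 : (D:ℝ) - ℓ ≤ ℓ := by
          have : (D:ℝ) ≤ 2 * ℓ := by exact_mod_cast hcase.le
          linarith
        have : (1:ℝ) ≤ (ℓ:ℝ) / ((D:ℝ) - ℓ) := (one_le_div hDl).mpr h1
        linarith
      rw [Real.sqrt_eq_zero_of_nonpos harg]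
      positivity
  · push_neg at hcase
    set m : ℕ := D / ℓ with hm
    have hm2 : 2 ≤ m := (Nat.le_div_iff_mul_le hℓ).mpr hcase
    have hmpos : (0:ℝ) < m := by
      have : 0 < m := by omega
      exact_mod_cast this
    -- window masses
    set w : ℕ → ℝ := fun j => ∑ d : Fin D,
        (if j*ℓ ≤ (d:ℕ) ∧ (d:ℕ) < j*ℓ+ℓ then ‖ψ d‖^2 else 0) with hw
    have hwnn : ∀ j, 0 ≤ w j := by
      intro j; apply Finset.sum_nonneg; intro d _; positivity
    have h1 : ∑ d : Fin D, ‖ψ d‖^2 = 1 := by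
      have := EuclideanSpace.norm_eq ψ
      rw [hψ] at this
      have h0 : Real.sqrt (∑ d : Fin D, ‖ψ d‖^2) = 1 := this.symm
      have hnn : (0:ℝ) ≤ ∑ d : Fin D, ‖ψ d‖^2 :=
        Finset.sum_nonneg (fun d _ => by positivity)
      nlinarith [Real.sq_sqrt hnn, Real.sqrt_nonneg (∑ d : Fin D, ‖ψ d‖^2)]
    have hsum : ∑ j ∈ Finset.range m, w j ≤ 1 := by
      rw [hw]
      rw [Finset.sum_comm]
      rw [← h1]
      apply Finset.sum_le_sum
      intro d _
      have key : ∀ j, (j*ℓ ≤ (d:ℕ) ∧ (d:ℕ) < j*ℓ+ℓ) ↔ j = (d:ℕ) / ℓ := by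
        intro j
        constructor
        · rintro ⟨ha, hb⟩
          exact (Nat.div_eq_of_lt_le ha (by rw [add_one_mul]; exact hb)).symm
        · rintro rfl
          refine ⟨Nat.div_mul_le_self _ _, ?_⟩
          have h1 := Nat.div_add_mod (d:ℕ) ℓ
          have h2 := Nat.mod_lt (d:ℕ) hℓ
          have : (d:ℕ)/ℓ*ℓ = ℓ*((d:ℕ)/ℓ) := by ring
          omega
      simp only [key]
      rw [Finset.sum_ite_eq' (Finset.range m) ((d:ℕ)/ℓ) (fun _ => ‖ψ d‖^2)]
      split
      · exact le_rfl
      · positivity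
    have hex : ∃ j ∈ Finset.range m, w j ≤ 1 / m := by
      apply Finset.exists_le_of_sum_le ⟨0, Finset.mem_range.mpr (by omega)⟩
      calc ∑ j ∈ Finset.range m, w j ≤ 1 := hsum
        _ = ∑ _j ∈ Finset.range m, 1/(m:ℝ) := by
            rw [Finset.sum_const, Finset.card_range, nsmul_eq_mul]
            field_simp
    obtain ⟨j, hjm, hwj⟩ := hex
    rw [Finset.mem_range] at hjm
    -- the truncated vector
    set P : EuclideanSpace ℂ (Fin D) := WithLp.toLp 2 (fun d : Fin D =>
        if j*ℓ ≤ (d:ℕ) ∧ (d:ℕ) < j*ℓ+ℓ then 0 else ψ d) with hP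
    set N : ℝ := ∑ d : Fin D, ‖P d‖^2 with hNdef
    have hN : N = 1 - w j := by
      rw [hNdef, hw, eq_sub_iff_add_eq, ← Finset.sum_add_distrib, ← h1]
      apply Finset.sum_congr rfl
      intro d _
      by_cases hd : j*ℓ ≤ (d:ℕ) ∧ (d:ℕ) < j*ℓ+ℓ
      · simp [hP, hd]
      · simp [hP, hd]
    have hmle : 1/(m:ℝ) ≤ 1/2 := by
      apply one_div_le_one_div_of_le <;> [norm_num; exact_mod_cast hm2]
    have hNpos : 0 < N := by
      rw [hN]; linarith
    have hPnorm : ‖P‖ = Real.sqrt N := by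
      rw [EuclideanSpace.norm_eq, hNdef]
    have hinner : ⟪P, ψ⟫_ℂ = (N : ℂ) := by
      rw [PiLp.inner_apply, hNdef]
      push_cast
      apply Finset.sum_congr rfl
      intro d _
      by_cases hd : j*ℓ ≤ (d:ℕ) ∧ (d:ℕ) < j*ℓ+ℓ
      · simp [hP, hd]
      · simp only [hP, if_neg hd, RCLike.inner_apply]
        rw [Complex.mul_conj]
        norm_cast
        rw [Complex.normSq_eq_norm_sq]
    -- build φ
    refine ⟨j*ℓ, ?_, ((Real.sqrt N : ℝ)⁻¹ : ℂ) • P, ?_, ?_, ?_⟩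
    · -- j*ℓ ≤ D - ℓ
      have h3 : (j+1)*ℓ ≤ m*ℓ := Nat.mul_le_mul_right ℓ (by omega)
      have h4 : m*ℓ ≤ D := Nat.div_mul_le_self D ℓ
      have : (j+1)*ℓ = j*ℓ + ℓ := by ring
      omega
    · rw [norm_smul, hPnorm]
      have hs : 0 < Real.sqrt N := Real.sqrt_pos.mpr hNpos
      rw [show ‖((Real.sqrt N : ℝ)⁻¹ : ℂ)‖ = (Real.sqrt N)⁻¹ by
        rw [norm_inv, Complex.norm_real, Real.norm_eq_abs, abs_of_nonneg hs.le]]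
      field_simp
    · intro d hd1 hd2
      have : P d = 0 := by simp [hP, hd1, hd2]
      show ((Real.sqrt N : ℝ)⁻¹ : ℂ) * P d = 0
      rw [this, mul_zero]
    · rw [inner_smul_left, hinner]
      have hs : 0 < Real.sqrt N := Real.sqrt_pos.mpr hNpos
      rw [map_inv₀, Complex.conj_ofReal]
      rw [norm_mul, norm_inv]
      simp only [Complex.norm_real, Real.norm_eq_abs]
      rw [abs_of_nonneg hs.le, abs_of_nonneg hNpos.le]
      have habs : (Real.sqrt N)⁻¹ * N = Real.sqrt N := by
        rw [inv_mul_eq_div, div_eq_iff hs.ne', ← sq, Real.sq_sqrt hNpos.le]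
      rw [habs]
      apply Real.sqrt_le_sqrt
      have hstep : (ℓ:ℝ) / ((D:ℝ) - ℓ) ≥ 1 / m := by
        rw [ge_iff_le, div_le_div_iff₀ hmpos hDl]
        have hlt : (D:ℕ) < (m + 1) * ℓ := by
          have h1 := Nat.div_add_mod D ℓ
          have h2 := Nat.mod_lt D hℓ
          have : (m+1)*ℓ = ℓ*(D/ℓ) + ℓ := by rw [hm]; ring
          omega
        have : (D:ℝ) < (m+1)*ℓ := by exact_mod_cast hlt
        nlinarith
      rw [hN]
      linarith
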